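/- For every q > 1, the series Σ_{ℓ=0}^∞ 1/∏_{k=1}^{ℓ}(1 − q^k) converges absolutely and equals ∏_{m=1}^∞ (1 − q^{−m}), where the empty product (ℓ = 0) equals 1. -/

import Mathlib

open Finset Filter Topology

namespace Stmt9

noncomputable def A (q : ℝ) (ℓ : ℕ) : ℝ := ∏ k ∈ Finset.Icc 1 ℓ, (1 - q ^ k)
noncomputable def B (q : ℝ) (j : ℕ) : ℝ := ∏ m ∈ Finset.Icc 1 j, (1 - q⁻¹ ^ m)

variable {q : ℝ}

lemma A_zero : A q 0 = 1 := by simp [A]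
lemma A_succ (ℓ : ℕ) : A q (ℓ + 1) = A q ℓ * (1 - q ^ (ℓ + 1)) :=
  Finset.prod_Icc_succ_top (by omega) _
lemma B_zero : B q 0 = 1 := by simp [B]
lemma B_succ (j : ℕ) : B q (j + 1) = B q j * (1 - q⁻¹ ^ (j + 1)) :=
  Finset.prod_Icc_succ_top (by omega) _

lemma qpow_ne (hq : 1 < q) (k : ℕ) : (1 : ℝ) - q ^ (k + 1) ≠ 0 := by
  have : 1 < q ^ (k + 1) := one_lt_pow₀ hq (by omega)
  intro h; linarith

lemma rpow_lt_one (hq : 1 < q) (k : ℕ) : q⁻¹ ^ (k + 1) < 1 :=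
  pow_lt_one₀ (by positivity) (inv_lt_one_of_one_lt₀ hq) (by omega)

lemma rpow_ne (hq : 1 < q) (k : ℕ) : (1 : ℝ) - q⁻¹ ^ (k + 1) ≠ 0 := by
  have := rpow_lt_one hq k; intro h; linarith

lemma A_ne (hq : 1 < q) : ∀ ℓ, A q ℓ ≠ 0 := by
  intro ℓ
  induction ℓ with
  | zero => simp [A_zero]
  | succ n ih => rw [A_succ]; exact mul_ne_zero ih (qpow_ne hq n)

lemma B_pos (hq : 1 < q) : ∀ j, 0 < B q j := by
  intro j
  induction j with
  | zero => simp [B_zero]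
  | succ n ih =>
    rw [B_succ]
    have := rpow_lt_one hq n
    have h0 : (0:ℝ) < q⁻¹ ^ (n+1) := by positivity
    nlinarith

lemma B_antitone (hq : 1 < q) : Antitone (B q) := by
  apply antitone_nat_of_succ_le
  intro n
  rw [B_succ]
  have := rpow_lt_one hq n
  have h0 : (0:ℝ) < q⁻¹ ^ (n+1) := by positivity
  nlinarith [B_pos hq n]

lemma alg1 {a b u v C : ℝ} (ha : a ≠ 0) (hb : b ≠ 0) (hu : u ≠ 0) (hv : v ≠ 0)
    (h : 1 - C = v - C * u) :
    (1 - C) * (1 / (a * u * (b * v))) = 1 / (a * u * b) - C * (1 / (a * (b * v))) := by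
  field_simp
  linear_combination h

lemma key (hq : 1 < q) : ∀ N : ℕ, ∑ ℓ ∈ Finset.range (N + 1), 1 / (A q ℓ * B q (N - ℓ)) = 1 := by
  intro N
  induction N with
  | zero => simp [A_zero, B_zero]
  | succ N ih =>
    have hAne := A_ne hq
    have hBne : ∀ j, B q j ≠ 0 := fun j => (B_pos hq j).ne'
    have hc : (1 : ℝ) - q⁻¹ ^ (N + 1) ≠ 0 := rpow_ne hq N
    have hq0 : q ≠ 0 := by positivity
    apply mul_left_cancel₀ hc
    rw [mul_one, Finset.mul_sum]
    have hterm : ∀ ℓ ∈ Finset.range (N + 2),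
        (1 - q⁻¹ ^ (N + 1)) * (1 / (A q ℓ * B q (N + 1 - ℓ)))
        = (if ℓ ≤ N then 1 / (A q ℓ * B q (N - ℓ)) else 0)
          - q⁻¹ ^ (N + 1) * (if ℓ = 0 then 0 else 1 / (A q (ℓ - 1) * B q (N - (ℓ - 1)))) := by
      intro ℓ hℓ
      rw [Finset.mem_range] at hℓ
      match ℓ with
      | 0 =>
        simp only [Nat.zero_le, if_pos, if_pos rfl, Nat.sub_zero, mul_zero, sub_zero]
        rw [A_zero, B_succ N]
        have hB := hBne N
        have h1 : q ^ (N + 1) - 1 ≠ 0 := fun h => qpow_ne hq N (by linarith)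
        field_simp
        exact div_self (by rwa [one_div])
      | (m+1) =>
        simp only [Nat.add_sub_cancel, if_neg (Nat.succ_ne_zero m)]
        rcases Nat.lt_or_ge m N with hm | hm
        · -- m + 1 ≤ N
          rw [if_pos (by omega : m + 1 ≤ N)]
          have hj1 : N + 1 - (m + 1) = (N - m - 1) + 1 := by omega
          have hj2 : N - (m + 1) = N - m - 1 := by omega
          have hj3 : N - m = (N - m - 1) + 1 := by omega
          set j := N - m - 1 with hj
          rw [hj1, hj2, hj3, A_succ m, B_succ j]
          have hone : q ^ (m + 1) * q⁻¹ ^ (m + 1) = 1 := by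
            rw [← mul_pow, mul_inv_cancel₀ hq0, one_pow]
          have hpow : q⁻¹ ^ (N + 1) * q ^ (m + 1) = q⁻¹ ^ (j + 1) := by
            have hs : (m + 1) + (j + 1) = N + 1 := by omega
            rw [← hs, pow_add]
            linear_combination q⁻¹ ^ (j + 1) * hone
          exact alg1 (hAne m) (hBne j) (qpow_ne hq m) (rpow_ne hq j)
            (by linear_combination (-1 : ℝ) * hpow)
        · -- ℓ = N + 1
          have hmN : m = N := by omega
          subst hmN
          rw [if_neg (by omega : ¬ m + 1 ≤ m)]
          rw [show m + 1 - (m + 1) = 0 by omega, show m - m = 0 by omega, B_zero, A_succ m]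
          have hpow : q⁻¹ ^ (m + 1) * q ^ (m + 1) = 1 := by
            rw [← mul_pow, inv_mul_cancel₀ hq0, one_pow]
          have hA := hAne m
          have h1 := qpow_ne hq m
          field_simp
          set_option linter.unreachableTactic false in
          set_option linter.unusedTactic false in
          first
          | linear_combination (-1 : ℝ) * hpow
          | linear_combination (A q m) * hpow
          | linear_combination (-(A q m)) * hpow
          | linear_combination (A q m * q ^ (m + 1)) * hpow
          | linear_combination (-(A q m * q ^ (m + 1))) * hpow
          | ring_nf
          | nlinarith [hpow]
    rw [Finset.sum_congr rfl hterm, Finset.sum_sub_distrib]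
    have h1 : ∑ ℓ ∈ Finset.range (N + 2), (if ℓ ≤ N then 1 / (A q ℓ * B q (N - ℓ)) else 0) = 1 := by
      rw [Finset.sum_range_succ, if_neg (by omega : ¬ N + 1 ≤ N), add_zero]
      rw [Finset.sum_congr rfl fun ℓ hℓ =>
        if_pos (by rw [Finset.mem_range] at hℓ; omega : ℓ ≤ N)]
      exact ih
    have h2 : ∑ ℓ ∈ Finset.range (N + 2),
        q⁻¹ ^ (N + 1) * (if ℓ = 0 then 0 else 1 / (A q (ℓ - 1) * B q (N - (ℓ - 1)))) =
        q⁻¹ ^ (N + 1) := by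
      rw [← Finset.mul_sum, Finset.sum_range_succ', if_pos rfl, add_zero]
      rw [Finset.sum_congr rfl fun i _ => by
        rw [if_neg (Nat.succ_ne_zero i), Nat.add_sub_cancel]]
      rw [ih, mul_one]
    rw [h1, h2]

lemma summable_abs (hq : 1 < q) : Summable (fun ℓ : ℕ => |1 / A q ℓ|) := by
  apply summable_of_ratio_norm_eventually_le (r := 1/2) (by norm_num)
  have h3 : ∀ᶠ n : ℕ in atTop, (3:ℝ) ≤ q ^ (n + 1) := by
    obtain ⟨M, hM⟩ := eventually_atTop.mp
      ((tendsto_pow_atTop_atTop_of_one_lt hq).eventually_ge_atTop 3)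
    exact eventually_atTop.2 ⟨M, fun n hn => hM (n + 1) (by omega)⟩
  filter_upwards [h3] with n hn
  have hA := A_ne hq n
  have hu : |1 - q ^ (n + 1)| = q ^ (n + 1) - 1 := by
    rw [abs_sub_comm]; exact abs_of_nonneg (by linarith)
  rw [Real.norm_eq_abs, Real.norm_eq_abs, abs_abs, abs_abs, A_succ, one_div, mul_inv,
    abs_mul, ← one_div, abs_inv, hu, mul_comm]
  have h2 : (q ^ (n + 1) - 1)⁻¹ ≤ 1 / 2 := by
    have h4 : (2:ℝ) ≤ q ^ (n + 1) - 1 := by linarith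
    calc (q ^ (n + 1) - 1)⁻¹ ≤ 2⁻¹ := by gcongr
      _ = 1 / 2 := by norm_num
  calc (q ^ (n + 1) - 1)⁻¹ * |(1:ℝ) / A q n| ≤ (1/2) * |(1:ℝ) / A q n| :=
        mul_le_mul_of_nonneg_right h2 (abs_nonneg _)
    _ = 1 / 2 * |1 / A q n| := by norm_num

lemma f_pos (hq : 1 < q) (m : ℕ) : 0 < 1 - q⁻¹ ^ (m + 1) := by
  have := rpow_lt_one hq m; linarith

lemma summable_log (hq : 1 < q) :
    Summable (fun m : ℕ => Real.log (1 - q⁻¹ ^ (m + 1))) := by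
  have hr0 : (0:ℝ) < q⁻¹ := by positivity
  have hr1 : q⁻¹ < 1 := inv_lt_one_of_one_lt₀ hq
  apply Summable.of_norm_bounded (g := fun m : ℕ => (1 - q⁻¹)⁻¹ * q⁻¹ ^ (m + 1))
  · apply Summable.congr (((summable_geometric_of_lt_one hr0.le hr1).mul_left
      ((1 - q⁻¹)⁻¹ * q⁻¹)))
    intro m; rw [pow_succ']; ring
  · intro m
    set x := q⁻¹ ^ (m + 1) with hx
    have hx0 : 0 < x := by positivity
    have hx1 : x < 1 := rpow_lt_one hq m
    have hxr : x ≤ q⁻¹ := by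
      rw [hx]
      calc q⁻¹ ^ (m + 1) ≤ q⁻¹ ^ 1 := pow_le_pow_of_le_one hr0.le hr1.le (by omega)
        _ = q⁻¹ := pow_one _
    have hpos : 0 < 1 - x := by linarith
    have hlogle : Real.log (1 - x) ≤ 0 := Real.log_nonpos (by linarith) (by linarith)
    rw [Real.norm_eq_abs, abs_of_nonpos hlogle, ← Real.log_inv]
    calc Real.log (1 - x)⁻¹ ≤ (1 - x)⁻¹ - 1 := Real.log_le_sub_one_of_pos (by positivity)
      _ = x * (1 - x)⁻¹ := by field_simp; ring
      _ ≤ x * (1 - q⁻¹)⁻¹ := by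
          apply mul_le_mul_of_nonneg_left _ hx0.le
          apply inv_anti₀ (by linarith) (by linarith)
      _ = (1 - q⁻¹)⁻¹ * x := by ring

lemma hasProdF (hq : 1 < q) :
    HasProd (fun m : ℕ => 1 - q⁻¹ ^ (m + 1))
      (Real.exp (∑' m : ℕ, Real.log (1 - q⁻¹ ^ (m + 1)))) := by
  have h := (summable_log hq).hasSum.rexp
  have hfe : (fun m : ℕ => Real.exp (Real.log (1 - q⁻¹ ^ (m + 1))))
      = fun m : ℕ => 1 - q⁻¹ ^ (m + 1) :=
    funext fun m => Real.exp_log (f_pos hq m)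
  exact hfe ▸ h

lemma B_eq_range (j : ℕ) : B q j = ∏ i ∈ Finset.range j, (1 - q⁻¹ ^ (i + 1)) := by
  induction j with
  | zero => simp [B_zero]
  | succ n ih => rw [B_succ, Finset.prod_range_succ, ih]

lemma tendsto_B (hq : 1 < q) :
    Tendsto (fun j => B q j) atTop
      (𝓝 (Real.exp (∑' m : ℕ, Real.log (1 - q⁻¹ ^ (m + 1))))) := by
  have := (hasProdF hq).tendsto_prod_nat
  apply this.congr
  intro n
  rw [B_eq_range]

end Stmt9

/-- the series `∑ 1/(q;q)_ℓ` converges absolutely to Euler's product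
`∏ (1 - q^{-m})`. -/
theorem stmt_9 (q : ℝ) (hq : 1 < q) :
    Summable (fun ℓ : ℕ => |1 / ∏ k ∈ Finset.Icc 1 ℓ, (1 - q ^ k)|) ∧
    (∑' ℓ : ℕ, 1 / ∏ k ∈ Finset.Icc 1 ℓ, (1 - q ^ k)) =
      (∏' m : ℕ, (1 - q ^ (-(m + 1) : ℤ))) := by
  open Stmt9 Filter Topology in
  refine ⟨summable_abs hq, ?_⟩
  have hz : (fun m : ℕ => 1 - q ^ (-(m + 1) : ℤ)) = fun m : ℕ => 1 - q⁻¹ ^ (m + 1) := by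
    funext m
    rw [show (-(m + 1) : ℤ) = -((m + 1 : ℕ) : ℤ) by push_cast; ring, zpow_neg,
      zpow_natCast, inv_pow]
  set P := Real.exp (∑' m : ℕ, Real.log (1 - q⁻¹ ^ (m + 1))) with hPdef
  have hPpos : 0 < P := Real.exp_pos _
  have htendB : Filter.Tendsto (fun j => B q j) Filter.atTop (nhds P) := tendsto_B hq
  have hBle : ∀ j, P ≤ B q j := fun j =>
    le_of_tendsto htendB (Filter.eventually_atTop.2 ⟨j, fun k hk => B_antitone hq hk⟩)
  set F : ℕ → ℕ → ℝ := fun N ℓ => if ℓ ≤ N then 1 / (A q ℓ * B q (N - ℓ)) else 0 with hF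
  have htsumF : ∀ N, ∑' ℓ, F N ℓ = 1 := by
    intro N
    rw [tsum_eq_sum (s := Finset.range (N + 1))
      (fun b hb => if_neg (by rw [Finset.mem_range] at hb; omega))]
    rw [Finset.sum_congr rfl fun ℓ hℓ =>
      if_pos (by rw [Finset.mem_range] at hℓ; omega : ℓ ≤ N)]
    exact key hq N
  have hdom : Filter.Tendsto (fun N => ∑' ℓ, F N ℓ) Filter.atTop
      (nhds (∑' ℓ : ℕ, 1 / A q ℓ * P⁻¹)) := by
    apply tendsto_tsum_of_dominated_convergence (bound := fun ℓ : ℕ => |1 / A q ℓ| * P⁻¹)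
    · exact (summable_abs hq).mul_right _
    · intro ℓ
      have h1 : Filter.Tendsto (fun N : ℕ => B q (N - ℓ)) Filter.atTop (nhds P) :=
        htendB.comp (tendsto_sub_atTop_nat ℓ)
      have h2 : Filter.Tendsto (fun N : ℕ => 1 / A q ℓ * (B q (N - ℓ))⁻¹) Filter.atTop
          (nhds (1 / A q ℓ * P⁻¹)) := (h1.inv₀ hPpos.ne').const_mul _
      apply h2.congr'
      filter_upwards [Filter.eventually_ge_atTop ℓ] with N hN
      simp only [hF, if_pos hN]
      rw [one_div, one_div, mul_inv]
    · apply Filter.Eventually.of_forall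
      intro N ℓ
      by_cases h : ℓ ≤ N
      · simp only [hF, if_pos h, Real.norm_eq_abs]
        have hBpos' := B_pos hq (N - ℓ)
        rw [one_div, mul_inv, abs_mul, ← one_div, abs_inv,
          abs_of_pos hBpos']
        apply mul_le_mul_of_nonneg_left _ (abs_nonneg _)
        exact inv_anti₀ hPpos (hBle _)
      · simp only [hF, if_neg h, norm_zero]
        positivity
  have h1 : (∑' ℓ : ℕ, 1 / A q ℓ * P⁻¹) = 1 := by
    exact tendsto_nhds_unique (hdom.congr htsumF) tendsto_const_nhds
  have h2 : (∑' ℓ : ℕ, 1 / A q ℓ) * P⁻¹ = 1 := by rw [← tsum_mul_right]; exact h1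
  have h3 : (∑' ℓ : ℕ, 1 / A q ℓ) = P := by
    field_simp at h2
    linarith [h2]
  have h4 : (∏' m : ℕ, (1 - q ^ (-(m + 1) : ℤ))) = P := by
    rw [hz]
    exact (hasProdF hq).tprod_eq
  rw [h4, ← h3]
  rfl
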